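/- For a controllable pair (A, b) with A ∈ M_n(ℝ), b ∈ ℝⁿ, the set of Hurwitz stabilizing state feedback gains H_x = {k ∈ ℝⁿ : all eigenvalues of A − b kᵀ have negative real part} is path-connected. -/

import Mathlib

open Polynomial Matrix

section MDL

lemma mdl_field {m : Type*} [Fintype m] [DecidableEq m] {K : Type*} [Field K]
    (M : Matrix m m K) (hM : M.det ≠ 0) (u v : m → K) :
    (M + replicateCol Unit u * replicateRow Unit v).det = M.det + v ⬝ᵥ (M.adjugate *ᵥ u) := by
  have hu : IsUnit M.det := hM.isUnit
  have h1 : ((1 + replicateRow Unit v * M⁻¹ * replicateCol Unit u : Matrix Unit Unit K)) default default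
      = 1 + v ⬝ᵥ (M⁻¹ *ᵥ u) := by
    simp only [Matrix.add_apply, Matrix.mul_apply, Matrix.replicateRow_apply, Matrix.replicateCol_apply,
      Matrix.one_apply_eq, dotProduct, Matrix.mulVec, dotProduct]
    congr 1
    simp only [Finset.sum_mul, Finset.mul_sum]
    rw [Finset.sum_comm]
    exact Finset.sum_congr rfl fun i _ => Finset.sum_congr rfl fun j _ => by ring
  rw [Matrix.det_add_replicateCol_mul_replicateRow hu u v,
    Matrix.det_unique (1 + replicateRow Unit v * M⁻¹ * replicateCol Unit u), h1,
    mul_add, mul_one, Matrix.inv_def, Ring.inverse_eq_inv]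
  congr 1
  rw [Matrix.smul_mulVec, dotProduct_smul, smul_eq_mul, ← mul_assoc,
    mul_inv_cancel₀ hM, one_mul]

/-- Matrix determinant lemma over an integral domain (nonzero det). -/
lemma mdl_domain {m : Type*} [Fintype m] [DecidableEq m] {R : Type*} [CommRing R] [IsDomain R]
    (M : Matrix m m R) (hM : M.det ≠ 0) (u v : m → R) :
    (M + replicateCol Unit u * replicateRow Unit v).det = M.det + v ⬝ᵥ (M.adjugate *ᵥ u) := by
  let K := FractionRing R
  let f : R →+* K := algebraMap R K
  have hf : Function.Injective f := IsFractionRing.injective R K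
  apply hf
  have hdet : (M.map f).det ≠ 0 := by
    intro h
    apply hM; apply hf
    rw [RingHom.map_det, show f.mapMatrix M = M.map f from rfl, h, map_zero]
  have := mdl_field (M.map f) hdet (f ∘ u) (f ∘ v)
  have hmap : (M + replicateCol Unit u * replicateRow Unit v).map f
      = M.map f + replicateCol Unit (f ∘ u) * replicateRow Unit (f ∘ v) := by
    ext i j
    simp [Matrix.map_apply, Matrix.add_apply, Matrix.mul_apply, Matrix.replicateRow_apply,
      Matrix.replicateCol_apply]
  rw [map_add]
  rw [show f (M + replicateCol Unit u * replicateRow Unit v).det = ((M + replicateCol Unit u * replicateRow Unit v).map f).det from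
    RingHom.map_det f _, hmap, this, show f M.det = (M.map f).det from RingHom.map_det f _]
  congr 1
  rw [show (M.map f).adjugate = (M.adjugate).map f from (RingHom.map_adjugate f M).symm]
  simp only [dotProduct, Matrix.mulVec, dotProduct, Function.comp_apply, Matrix.map_apply]
  rw [map_sum]
  refine Finset.sum_congr rfl fun i _ => ?_
  rw [_root_.map_mul f, map_sum]
  congr 1
  exact Finset.sum_congr rfl fun j _ => (_root_.map_mul f _ _).symm

end MDL

section Wvec

noncomputable def wvec {n : ℕ} (A : Matrix (Fin n) (Fin n) ℝ) (b : Fin n → ℝ) (j : ℕ) :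
    Fin n → ℝ :=
  fun p => (((charmatrix A).adjugate *ᵥ fun q => (C (b q) : ℝ[X])) p).coeff j

lemma charpoly_natDeg {n : ℕ} (A : Matrix (Fin n) (Fin n) ℝ) : A.charpoly.natDegree = n := by
  rw [Matrix.charpoly_natDegree_eq_dim, Fintype.card_fin]

lemma wvec_rec {n : ℕ} (A : Matrix (Fin n) (Fin n) ℝ) (b : Fin n → ℝ) (j : ℕ) :
    wvec A b j = A *ᵥ wvec A b (j + 1) + (A.charpoly.coeff (j + 1)) • b := by
  set y : Fin n → ℝ[X] := (charmatrix A).adjugate *ᵥ fun q => (C (b q) : ℝ[X]) with hy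
  have key : charmatrix A *ᵥ y = fun p => A.charpoly * C (b p) := by
    rw [hy, mulVec_mulVec, Matrix.mul_adjugate]
    funext p
    rw [smul_mulVec, one_mulVec]
    simp [Matrix.charpoly]
  funext p
  have hp : (charmatrix A *ᵥ y) p = A.charpoly * C (b p) := congrFun key p
  have expand : (charmatrix A *ᵥ y) p
      = X * y p - ∑ q, C (A p q) * y q := by
    simp only [Matrix.mulVec, dotProduct, charmatrix_apply, sub_mul]
    rw [Finset.sum_sub_distrib]
    congr 1
    rw [Finset.sum_eq_single p]
    · simp
    · intro q _ hq; simp [Matrix.diagonal_apply_ne _ (Ne.symm hq)]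
    · simp
  rw [expand] at hp
  have hco := congrArg (fun r => Polynomial.coeff r (j+1)) hp
  simp only [coeff_sub, coeff_X_mul, finset_sum_coeff, coeff_C_mul, coeff_mul_C] at hco
  show (y p).coeff j = (A *ᵥ wvec A b (j + 1) + (A.charpoly.coeff (j + 1)) • b) p
  have hw : wvec A b (j+1) = fun q => (y q).coeff (j+1) := rfl
  rw [Pi.add_apply, Pi.smul_apply, hw, smul_eq_mul]
  simp only [Matrix.mulVec, dotProduct]
  linarith [hco]

lemma wvec_vanish {n : ℕ} (A : Matrix (Fin n) (Fin n) ℝ) (b : Fin n → ℝ) :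
    ∀ j, n ≤ j → wvec A b j = 0 := by
  set y : Fin n → ℝ[X] := (charmatrix A).adjugate *ᵥ fun q => (C (b q) : ℝ[X]) with hy
  set D : ℕ := Finset.univ.sup fun p => (y p).natDegree with hD
  have hbig : ∀ j, D < j → wvec A b j = 0 := by
    intro j hj
    funext p
    have hle : (y p).natDegree ≤ Finset.univ.sup fun q => (y q).natDegree :=
      Finset.le_sup (f := fun q => (y q).natDegree) (Finset.mem_univ p)
    rw [← hD] at hle
    exact coeff_eq_zero_of_natDegree_lt (lt_of_le_of_lt hle hj)
  have main : ∀ m j, n ≤ j → D < j + m → wvec A b j = 0 := by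
    intro m
    induction m with
    | zero => intro j hj h; exact hbig j (by omega)
    | succ m ih =>
      intro j hj h
      by_cases hDj : D < j
      · exact hbig j hDj
      · rw [wvec_rec, ih (j+1) (by omega) (by omega),
          coeff_eq_zero_of_natDegree_lt (by rw [charpoly_natDeg]; omega)]
        simp
  intro j hj
  exact main (D + 1) j hj (by omega)

lemma wvec_top {n : ℕ} (hn : 1 ≤ n) (A : Matrix (Fin n) (Fin n) ℝ) (b : Fin n → ℝ) :
    wvec A b (n - 1) = b := by
  rw [wvec_rec, show n - 1 + 1 = n from by omega, wvec_vanish A b n le_rfl,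
    show A.charpoly.coeff n = 1 from by
      have := (Matrix.charpoly_monic A).coeff_natDegree
      rwa [charpoly_natDeg] at this]
  simp

lemma wvec_sub_mem {n : ℕ} (A : Matrix (Fin n) (Fin n) ℝ) (b : Fin n → ℝ) (m : ℕ) (hm : m < n) :
    wvec A b (n - 1 - m) - A ^ m *ᵥ b
      ∈ Submodule.span ℝ ((fun i => A ^ i *ᵥ b) '' Set.Iio m) := by
  induction m with
  | zero => simp [wvec_top (by omega) A b, Matrix.one_mulVec]
  | succ m ih =>
    have hrec := wvec_rec A b (n - 1 - (m + 1))
    rw [show n - 1 - (m + 1) + 1 = n - 1 - m from by omega] at hrec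
    have hAspan : A *ᵥ (wvec A b (n - 1 - m) - A ^ m *ᵥ b)
        ∈ Submodule.span ℝ ((fun i => A ^ i *ᵥ b) '' Set.Iio (m + 1)) := by
      have := Submodule.mem_map_of_mem (f := A.mulVecLin) (ih (by omega))
      rw [Submodule.map_span] at this
      refine Submodule.span_mono ?_ this
      rintro x ⟨y, ⟨i, hi, rfl⟩, rfl⟩
      refine ⟨i + 1, by simpa using Nat.add_lt_add_right hi 1, ?_⟩
      simp only [Matrix.mulVecLin_apply, Matrix.mulVec_mulVec]
      rw [← pow_succ']
    have hb : b ∈ Submodule.span ℝ ((fun i => A ^ i *ᵥ b) '' Set.Iio (m + 1)) := by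
      apply Submodule.subset_span
      exact ⟨0, by simp, by simp [Matrix.one_mulVec]⟩
    have : wvec A b (n - 1 - (m + 1)) - A ^ (m + 1) *ᵥ b
        = A *ᵥ (wvec A b (n - 1 - m) - A ^ m *ᵥ b)
          + (A.charpoly.coeff (n - 1 - m)) • b := by
      rw [hrec]
      rw [Matrix.mulVec_sub]
      rw [show A *ᵥ (A ^ m *ᵥ b) = A ^ (m+1) *ᵥ b from by
        rw [Matrix.mulVec_mulVec, ← pow_succ']]
      abel
    rw [this]
    exact Submodule.add_mem _ hAspan (Submodule.smul_mem _ _ hb)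

lemma amb_mem_span_wvec {n : ℕ} (A : Matrix (Fin n) (Fin n) ℝ) (b : Fin n → ℝ) (m : ℕ)
    (hm : m < n) :
    A ^ m *ᵥ b ∈ Submodule.span ℝ (Set.range fun j : ℕ => wvec A b j) := by
  induction m using Nat.strong_induction_on with
  | _ m ih =>
    have h1 : wvec A b (n - 1 - m) ∈ Submodule.span ℝ (Set.range fun j : ℕ => wvec A b j) :=
      Submodule.subset_span ⟨n - 1 - m, rfl⟩
    have h2 : wvec A b (n - 1 - m) - A ^ m *ᵥ b
        ∈ Submodule.span ℝ (Set.range fun j : ℕ => wvec A b j) := by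
      refine Submodule.span_le.mpr ?_ (wvec_sub_mem A b m hm)
      rintro x ⟨i, hi, rfl⟩
      have hi' : i < m := hi
      exact ih i hi' (by omega)
    have := Submodule.sub_mem _ h1 h2
    simpa using this

lemma dot_wvec_zero {n : ℕ} (A : Matrix (Fin n) (Fin n) ℝ) (b : Fin n → ℝ)
    (hctrb : (Matrix.of fun i j : Fin n => ((A ^ (j : ℕ)) *ᵥ b) i).rank = n)
    (k : Fin n → ℝ) (h : ∀ j : ℕ, k ⬝ᵥ wvec A b j = 0) : k = 0 := by
  set f : (Fin n → ℝ) →ₗ[ℝ] ℝ :=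
    { toFun := fun v => k ⬝ᵥ v
      map_add' := fun x y => dotProduct_add k x y
      map_smul' := fun c x => by simp [dotProduct_smul] } with hf
  have hker : Submodule.span ℝ (Set.range fun j : ℕ => wvec A b j) ≤ LinearMap.ker f := by
    rw [Submodule.span_le]
    rintro x ⟨j, rfl⟩
    exact h j
  have hspan : Submodule.span ℝ (Set.range fun j : Fin n => A ^ (j : ℕ) *ᵥ b) = ⊤ := by
    apply Submodule.eq_top_of_finrank_eq
    have := Matrix.rank_eq_finrank_span_cols (Matrix.of fun i j : Fin n => ((A ^ (j : ℕ)) *ᵥ b) i)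
    rw [hctrb] at this
    have hr : Set.range (Matrix.of fun i j : Fin n => ((A ^ (j : ℕ)) *ᵥ b) i).col
        = Set.range fun j : Fin n => A ^ (j : ℕ) *ᵥ b := by
      congr 1
    rw [hr] at this
    rw [← this, Module.finrank_pi]
    simp
  have hker2 : (⊤ : Submodule ℝ (Fin n → ℝ)) ≤ LinearMap.ker f := by
    rw [← hspan, Submodule.span_le]
    rintro x ⟨m, rfl⟩
    exact hker (amb_mem_span_wvec A b (m : ℕ) m.isLt)
  have : f k = 0 := hker2 Submodule.mem_top
  have hk : k ⬝ᵥ k = 0 := this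
  exact (dotProduct_self_eq_zero).mp hk

lemma coeff_charpoly_feedback {n : ℕ} (A : Matrix (Fin n) (Fin n) ℝ) (b : Fin n → ℝ)
    (k : Fin n → ℝ) (j : ℕ) :
    (A - vecMulVec b k).charpoly.coeff j = A.charpoly.coeff j + k ⬝ᵥ wvec A b j := by
  have hcm : charmatrix (A - vecMulVec b k)
      = charmatrix A + replicateCol Unit (fun q => (C (b q) : ℝ[X])) * replicateRow Unit (fun q => C (k q)) := by
    ext p q
    simp only [charmatrix_apply, Matrix.sub_apply, Matrix.add_apply, Matrix.mul_apply,
      Matrix.replicateCol_apply, Matrix.replicateRow_apply, Matrix.vecMulVec_apply, Finset.univ_unique,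
      Finset.sum_singleton, map_sub, _root_.map_mul]
    ring_nf
  have hdet : (charmatrix A).det ≠ 0 := by
    rw [← Matrix.charpoly]
    exact (Matrix.charpoly_monic A).ne_zero
  have := mdl_domain (charmatrix A) hdet (fun q => (C (b q) : ℝ[X])) (fun q => C (k q))
  rw [Matrix.charpoly, hcm, this, ← Matrix.charpoly]
  rw [coeff_add]
  congr 1
  simp only [dotProduct, finset_sum_coeff, coeff_C_mul]
  exact Finset.sum_congr rfl fun q _ => rfl

end Wvec

noncomputable def Qp (p : ℝ[X]) (u : ℝ) : ℝ[X] := (p.scaleRoots u).comp (X + C (1 - u))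

section Qp
variable {n : ℕ} {p : ℝ[X]} (hp : p.Monic) (hdeg : p.natDegree = n)
include hp hdeg

lemma scaleRoots_zero' : p.scaleRoots 0 = X ^ n := by
  ext i
  rw [coeff_scaleRoots, hdeg, coeff_X_pow]
  rcases lt_trichotomy i n with h | h | h
  · rw [zero_pow (Nat.sub_ne_zero_of_lt h), if_neg h.ne, mul_zero]
  · subst h
    rw [Nat.sub_self, pow_zero, mul_one, if_pos rfl, ← hdeg]
    exact hp.coeff_natDegree
  · rw [coeff_eq_zero_of_natDegree_lt (by omega), if_neg h.ne', zero_mul]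

omit hp hdeg in
lemma Qp_monic (hp : p.Monic) (u : ℝ) : (Qp p u).Monic :=
  Monic.comp_X_add_C ((monic_scaleRoots_iff u).mpr hp) _

omit hp in
lemma Qp_natDegree (u : ℝ) : (Qp p u).natDegree = n := by
  rw [Qp, natDegree_comp, natDegree_scaleRoots, hdeg, natDegree_X_add_C, mul_one]

omit hp in
lemma Qp_coeff (u : ℝ) (m : ℕ) :
    (Qp p u).coeff m
      = ∑ i ∈ Finset.range (n + 1),
          (p.coeff i * u ^ (n - i)) * ((1 - u) ^ (i - m) * (i.choose m : ℝ)) := by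
  have hlt : (p.scaleRoots u).natDegree < n + 1 := by
    rw [natDegree_scaleRoots, hdeg]; omega
  rw [Qp, show (p.scaleRoots u).comp (X + C (1 - u))
      = eval₂ C (X + C (1 - u)) (p.scaleRoots u) from rfl,
    eval₂_eq_sum_range' C hlt (X + C (1 - u)), finset_sum_coeff]
  refine Finset.sum_congr rfl fun i _ => ?_
  rw [coeff_C_mul, coeff_X_add_C_pow, coeff_scaleRoots, hdeg]

omit hp hdeg in
lemma Qp_one : Qp p 1 = p := by
  rw [Qp, scaleRoots_one]
  simp

lemma Qp_zero : Qp p 0 = (X + C (1 : ℝ)) ^ n := by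
  rw [Qp, scaleRoots_zero' hp hdeg]
  simp [X_pow_comp]

lemma Qp_hurwitz (hn : 1 ≤ n) (hhur : ∀ z : ℂ, aeval z p = 0 → z.re < 0)
    (u : ℝ) (hu0 : 0 ≤ u) (hu1 : u ≤ 1) :
    ∀ z : ℂ, aeval z (Qp p u) = 0 → z.re < 0 := by
  intro z hz
  rw [Qp, aeval_comp] at hz
  have hzg : (aeval z (X + C (1 - u)) : ℂ) = z + (1 - (u : ℂ)) := by
    simp
  rw [hzg] at hz
  rcases eq_or_lt_of_le hu0 with hu | hu
  · rw [← hu, scaleRoots_zero' hp hdeg] at hz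
    simp only [map_pow, aeval_X] at hz
    have hz1 : z + (1 - ((0:ℝ) : ℂ)) = 0 := pow_eq_zero_iff (by omega) |>.mp hz
    have : z = -1 := by
      push_cast at hz1
      linear_combination hz1
    rw [this]
    norm_num
  · have huC : ((u : ℝ) : ℂ) ≠ 0 := by exact_mod_cast hu.ne'
    set r : ℂ := (z + (1 - (u : ℂ))) / (u : ℂ) with hr
    have key := scaleRoots_eval₂_mul (algebraMap ℝ ℂ) r u (p := p)
    rw [show (algebraMap ℝ ℂ) u * r = z + (1 - (u : ℂ)) by
      rw [hr]; field_simp; rfl] at key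
    rw [aeval_def] at hz
    rw [hz] at key
    have hfac : ((u : ℂ)) ^ p.natDegree ≠ 0 := pow_ne_zero _ huC
    have hzero : eval₂ (algebraMap ℝ ℂ) r p = 0 := by
      rcases mul_eq_zero.mp key.symm with h | h
      · exact absurd h (by simpa using hfac)
      · exact h
    have hre : r.re < 0 := hhur r (by rwa [aeval_def])
    have hzeq : z = (u : ℂ) * r - (1 - (u : ℂ)) := by
      rw [hr]; field_simp; ring
    have hzre : z.re = u * r.re - (1 - u) := by
      rw [hzeq]
      simp [Complex.mul_re, Complex.sub_re]
    rw [hzre]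
    nlinarith
end Qp

lemma monic_poly_ext {n : ℕ} {p q : ℝ[X]} (hp : p.Monic) (hq : q.Monic)
    (hpd : p.natDegree = n) (hqd : q.natDegree = n)
    (h : ∀ j, j < n → p.coeff j = q.coeff j) : p = q := by
  ext j
  rcases lt_trichotomy j n with hj | hj | hj
  · exact h j hj
  · subst hj
    rw [← hpd, hp.coeff_natDegree, hpd, ← hqd, hq.coeff_natDegree]
  · rw [coeff_eq_zero_of_natDegree_lt (by omega), coeff_eq_zero_of_natDegree_lt (by omega)]

/-- For a controllable pair `(A, b)`, the set of Hurwitz stabilizing state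
feedback gains `H_x = {k ∈ ℝⁿ : all eigenvalues of A − b kᵀ have negative real part}`
is path-connected. -/
theorem hurwitz_state_feedback_gains_pathConnected (n : ℕ) (hn : 1 ≤ n)
    (A : Matrix (Fin n) (Fin n) ℝ) (b : Fin n → ℝ)
    (hctrb : (Matrix.of fun i j : Fin n => ((A ^ (j : ℕ)) *ᵥ b) i).rank = n) :
    IsPathConnected {k : Fin n → ℝ |
      ∀ z : ℂ, aeval z (A - vecMulVec b k).charpoly = 0 → z.re < 0} := by
  classical
  set S : Set (Fin n → ℝ) := {k : Fin n → ℝ |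
      ∀ z : ℂ, aeval z (A - vecMulVec b k).charpoly = 0 → z.re < 0} with hS
  -- The linear map k ↦ (k ⬝ᵥ w_j)_j
  set L : (Fin n → ℝ) →ₗ[ℝ] (Fin n → ℝ) :=
    { toFun := fun k => fun j : Fin n => k ⬝ᵥ wvec A b (j : ℕ)
      map_add' := fun x y => funext fun j => add_dotProduct x y _
      map_smul' := fun c x => funext fun j => smul_dotProduct c x _ } with hL
  have hLapp : ∀ k (j : Fin n), L k j = k ⬝ᵥ wvec A b (j : ℕ) := fun k j => rfl
  have hLinj : Function.Injective L := by
    rw [injective_iff_map_eq_zero]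
    intro k hLk
    refine dot_wvec_zero A b hctrb k fun j => ?_
    by_cases hj : j < n
    · have := congrFun hLk ⟨j, hj⟩
      simpa [hLapp] using this
    · rw [wvec_vanish A b j (by omega), dotProduct_zero]
  set E : (Fin n → ℝ) ≃ₗ[ℝ] (Fin n → ℝ) :=
    LinearEquiv.ofBijective L ⟨hLinj, (LinearMap.injective_iff_surjective).mp hLinj⟩ with hE
  have hEapp : ∀ k, E k = L k := fun k => rfl
  have hEsymm_cont : Continuous E.symm :=
    LinearMap.continuous_of_finiteDimensional (E.symm : (Fin n → ℝ) →ₗ[ℝ] (Fin n → ℝ))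
  -- the inverse construction
  set κ : ℝ[X] → (Fin n → ℝ) :=
    fun q => E.symm fun j : Fin n => q.coeff (j : ℕ) - A.charpoly.coeff (j : ℕ) with hκ
  have hrecon : ∀ q : ℝ[X], q.Monic → q.natDegree = n →
      (A - vecMulVec b (κ q)).charpoly = q := by
    intro q hq hqd
    have hLκ : L (κ q) = fun j : Fin n => q.coeff (j : ℕ) - A.charpoly.coeff (j : ℕ) := by
      rw [hκ, ← hEapp, LinearEquiv.apply_symm_apply]
    refine monic_poly_ext (Matrix.charpoly_monic _) hq (charpoly_natDeg _) hqd fun j hj => ?_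
    rw [coeff_charpoly_feedback]
    have := congrFun hLκ ⟨j, hj⟩
    rw [hLapp] at this
    rw [show ((⟨j, hj⟩ : Fin n) : ℕ) = j from rfl] at this
    rw [this]
    ring
  have hκcharpoly : ∀ k : Fin n → ℝ, κ ((A - vecMulVec b k).charpoly) = k := by
    intro k
    have : (fun j : Fin n => (A - vecMulVec b k).charpoly.coeff (j : ℕ)
        - A.charpoly.coeff (j : ℕ)) = L k := by
      funext j
      rw [hLapp, coeff_charpoly_feedback]
      ring
    rw [hκ]
    dsimp only
    rw [this, ← hEapp, LinearEquiv.symm_apply_apply]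
  -- the base point
  set kstar : Fin n → ℝ := κ ((X + C (1 : ℝ)) ^ n) with hkstar
  have hXC1monic : ((X + C (1 : ℝ)) ^ n).Monic := (monic_X_add_C 1).pow n
  have hXC1deg : ((X + C (1 : ℝ)) ^ n).natDegree = n := by
    rw [natDegree_pow, natDegree_X_add_C, mul_one]
  have hstar : kstar ∈ S := by
    intro z hz
    rw [hrecon _ hXC1monic hXC1deg] at hz
    simp only [map_pow, map_add, aeval_X, aeval_C] at hz
    have hz1 : z + (algebraMap ℝ ℂ) 1 = 0 := pow_eq_zero_iff (by omega) |>.mp hz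
    have : z = -1 := by
      simp only [_root_.map_one] at hz1
      linear_combination hz1
    rw [this]
    norm_num
  refine ⟨kstar, hstar, ?_⟩
  intro k hk
  -- the path from kstar to k
  set p : ℝ[X] := (A - vecMulVec b k).charpoly with hpdef
  have hpmonic : p.Monic := Matrix.charpoly_monic _
  have hpdeg : p.natDegree = n := charpoly_natDeg _
  set γ : ℝ → (Fin n → ℝ) := fun u => κ (Qp p u) with hγ
  have hγcont : Continuous γ := by
    refine hEsymm_cont.comp ?_
    refine continuous_pi fun j => ?_
    have : (fun u : ℝ => (Qp p u).coeff (j : ℕ) - A.charpoly.coeff (j : ℕ))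
        = fun u : ℝ => (∑ i ∈ Finset.range (n + 1),
            (p.coeff i * u ^ (n - i)) * ((1 - u) ^ (i - (j : ℕ)) * (i.choose (j : ℕ) : ℝ)))
          - A.charpoly.coeff (j : ℕ) := by
      funext u
      rw [Qp_coeff hpdeg]
    show Continuous fun u : ℝ => (Qp p u).coeff (j : ℕ) - A.charpoly.coeff (j : ℕ)
    rw [this]
    refine Continuous.sub ?_ continuous_const
    refine continuous_finset_sum _ fun i _ => ?_
    fun_prop
  have hγ0 : γ 0 = kstar := by
    rw [hγ, hkstar]
    dsimp only
    rw [Qp_zero hpmonic hpdeg]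
  have hγ1 : γ 1 = k := by
    rw [hγ]
    dsimp only
    rw [Qp_one, hpdef, hκcharpoly]
  have hγmem : ∀ u : ℝ, 0 ≤ u → u ≤ 1 → γ u ∈ S := by
    intro u hu0 hu1
    intro z hz
    rw [hγ] at hz
    dsimp only at hz
    rw [hrecon _ (Qp_monic hpmonic u) (Qp_natDegree hpdeg u)] at hz
    exact Qp_hurwitz hpmonic hpdeg hn hk u hu0 hu1 z hz
  exact ⟨{ toFun := fun t => γ (t : ℝ)
           continuous_toFun := hγcont.comp continuous_subtype_val
           source' := hγ0
           target' := hγ1 },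
    fun t => hγmem (t : ℝ) t.2.1 t.2.2⟩
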